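/- Let S be a set of n points on a circle of radius 1/√2 in ℝ³ (or ℝ²). Then the number of unordered pairs of points of S at distance exactly 1 is at most n, and at most n−1 if n is not divisible by 4. -/

import Mathlib

open Complex

noncomputable def phi (c p : EuclideanSpace ℝ (Fin 2)) : ℂ := ⟨p 0 - c 0, p 1 - c 1⟩

lemma phi_dist (c p q : EuclideanSpace ℝ (Fin 2)) : dist (phi c p) (phi c q) = dist p q := by
  rw [Complex.dist_eq, EuclideanSpace.dist_eq, Complex.norm_def, Complex.normSq_apply]
  simp [phi, Fin.sum_univ_two, Real.dist_eq, sq_abs]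
  ring_nf

lemma phi_inj (c : EuclideanSpace ℝ (Fin 2)) : Function.Injective (phi c) := by
  intro p q h
  simp only [phi, Complex.mk.injEq] at h
  ext i
  fin_cases i <;> simp <;> linarith [h.1, h.2]

lemma phi_abs (c p : EuclideanSpace ℝ (Fin 2)) : ‖phi c p‖ = dist p c := by
  have h0 : phi c c = 0 := by simp [phi, Complex.ext_iff]
  rw [← phi_dist c p c, Complex.dist_eq, h0, sub_zero]
set_option maxHeartbeats 1000000 in
lemma unit_iff {z w : ℂ} (hz : ‖z‖ = 1 / Real.sqrt 2)
    (hw : ‖w‖ = 1 / Real.sqrt 2) :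
    ‖z - w‖ = 1 ↔ z = I*w ∨ z = -I*w := by
  have hnz : Complex.normSq z = 1/2 := by
    have h := Complex.sq_norm z
    rw [hz] at h
    rw [← h, div_pow, Real.sq_sqrt (by norm_num : (2:ℝ) ≥ 0)]
    norm_num
  have hnw : Complex.normSq w = 1/2 := by
    have h := Complex.sq_norm w
    rw [hw] at h
    rw [← h, div_pow, Real.sq_sqrt (by norm_num : (2:ℝ) ≥ 0)]
    norm_num
  obtain ⟨a, b⟩ := z
  obtain ⟨cc, d⟩ := w
  rw [Complex.normSq_mk] at hnz hnw
  have hre : a^2 + b^2 = 1/2 := by nlinarith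
  have hrw : cc^2 + d^2 = 1/2 := by nlinarith
  have hIw : Complex.I * ⟨cc, d⟩ = (⟨-d, cc⟩ : ℂ) := by
    apply Complex.ext <;> simp [Complex.mul_re, Complex.mul_im]
  have hnIw : -Complex.I * ⟨cc, d⟩ = (⟨d, -cc⟩ : ℂ) := by
    apply Complex.ext <;> simp [Complex.mul_re, Complex.mul_im]
  rw [hIw, hnIw]
  have hsub : (⟨a, b⟩ : ℂ) - ⟨cc, d⟩ = (⟨a - cc, b - d⟩ : ℂ) := by
    apply Complex.ext <;> simp [Complex.sub_re, Complex.sub_im]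
  rw [hsub]
  constructor
  · intro h
    have hsq : Complex.normSq ⟨a - cc, b - d⟩ = 1 := by
      have h2 := Complex.sq_norm (⟨a - cc, b - d⟩ : ℂ); rw [h] at h2
      rw [← h2]; norm_num
    rw [Complex.normSq_mk] at hsq
    have hdot : a * cc + b * d = 0 := by nlinarith
    have hcross : (a*d - b*cc - 1/2) * (a*d - b*cc + 1/2) = 0 := by nlinarith
    rcases mul_eq_zero.1 hcross with hc | hc
    · right
      have hc' : a*d - b*cc = 1/2 := by linarith
      have e11 : (a-d)^2 = 0 := by nlinarith [sq_nonneg (a - d), sq_nonneg (b + cc)]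
      have e12 : (b+cc)^2 = 0 := by nlinarith [sq_nonneg (a - d), sq_nonneg (b + cc)]
      have e1 := sq_eq_zero_iff.mp e11
      have e2 := sq_eq_zero_iff.mp e12
      apply Complex.ext <;> simp <;> linarith
    · left
      have hc' : a*d - b*cc = -(1/2) := by linarith
      have e11 : (a+d)^2 = 0 := by nlinarith [sq_nonneg (a + d), sq_nonneg (b - cc)]
      have e12 : (b-cc)^2 = 0 := by nlinarith [sq_nonneg (a + d), sq_nonneg (b - cc)]
      have e1 := sq_eq_zero_iff.mp e11
      have e2 := sq_eq_zero_iff.mp e12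
      apply Complex.ext <;> simp <;> linarith
  · intro h
    have habs : Complex.normSq ⟨a - cc, b - d⟩ = 1 := by
      rcases h with h | h <;> rw [Complex.mk.injEq] at h <;>
        rw [Complex.normSq_mk] <;> obtain ⟨h1, h2⟩ := h <;> subst h1 <;> subst h2 <;>
        linear_combination 2 * hrw
    have h2 := Complex.sq_norm (⟨a - cc, b - d⟩ : ℂ)
    rw [habs] at h2
    have hnn := norm_nonneg (⟨a - cc, b - d⟩ : ℂ)
    nlinarith

lemma quad_roots {z w : ℂ} (h : z^4 = w^4) :
    z = w ∨ z = -w ∨ z = I*w ∨ z = -I*w := by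
  have hf : (z - w) * (z + w) * (z - I*w) * (z + I*w) = 0 := by
    have : (z - w) * (z + w) * (z - I*w) * (z + I*w) = z^4 - w^4 := by
      have h2 : I^2 = -1 := Complex.I_sq
      ring_nf
      rw [h2]
      ring
    rw [this, h, sub_self]
  rcases mul_eq_zero.1 hf with hf | hf
  · rcases mul_eq_zero.1 hf with hf | hf
    · rcases mul_eq_zero.1 hf with hf | hf
      · exact Or.inl (by linear_combination hf)
      · exact Or.inr (Or.inl (by linear_combination hf))
    · exact Or.inr (Or.inr (Or.inl (by linear_combination hf)))
  · exact Or.inr (Or.inr (Or.inr (by linear_combination hf)))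

lemma smul_ne {u v z : ℂ} (hz : z ≠ 0) (huv : u ≠ v) : u * z ≠ v * z :=
  fun h => huv (mul_right_cancel₀ hz h)

lemma four_dvd {U : Finset ℂ} (h0 : ∀ z ∈ U, z ≠ 0)
    (hcl : ∀ z ∈ U, Complex.I * z ∈ U) : 4 ∣ U.card := by
  classical
  rw [Finset.card_eq_sum_card_image (fun z => z^4) U]
  apply Finset.dvd_sum
  intro v hv
  obtain ⟨z₀, hz₀U, hz₀v⟩ := Finset.mem_image.1 hv
  have hz0 : z₀ ≠ 0 := h0 z₀ hz₀U
  have hm1 : I * z₀ ∈ U := hcl _ hz₀U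
  have hm2 : -z₀ ∈ U := by
    have := hcl _ hm1
    rwa [show I * (I * z₀) = -z₀ by rw [← mul_assoc, Complex.I_mul_I]; ring] at this
  have hm3 : -I * z₀ ∈ U := by
    have := hcl _ hm2
    rwa [show I * -z₀ = -I * z₀ by ring] at this
  have hI4 : I^4 = 1 := by
    rw [show (4:ℕ) = 2*2 from rfl, pow_mul, Complex.I_sq]; norm_num
  have hset : U.filter (fun z => z^4 = v) = {z₀, I*z₀, -z₀, -I*z₀} := by
    ext z
    simp only [Finset.mem_filter, Finset.mem_insert, Finset.mem_singleton]
    constructor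
    · rintro ⟨hzU, hz4⟩
      have : z^4 = z₀^4 := by rw [hz4, hz₀v]
      rcases quad_roots this with h | h | h | h
      · exact Or.inl h
      · exact Or.inr (Or.inr (Or.inl h))
      · exact Or.inr (Or.inl h)
      · exact Or.inr (Or.inr (Or.inr h))
    · have hp : ∀ u : ℂ, (I*u)^4 = u^4 := fun u => by rw [mul_pow, hI4, one_mul]
      have hn : ∀ u : ℂ, (-u)^4 = u^4 := fun u => by ring
      rintro (h | h | h | h) <;> subst h <;> refine ⟨by assumption, ?_⟩
      · exact hz₀v
      · rw [hp]; exact hz₀v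
      · rw [hn]; exact hz₀v
      · rw [show -I*z₀ = -(I*z₀) by ring, hn, hp]; exact hz₀v
  rw [hset]
  have cancel : ∀ u : ℂ, u ≠ 0 → u * z₀ = 0 → False := fun u hu h =>
    hz0 ((mul_eq_zero.1 h).resolve_left hu)
  have q1 : z₀ ≠ I*z₀ := fun h => cancel (1 - I) (by simp [Complex.ext_iff]) (by linear_combination h)
  have q2 : z₀ ≠ -z₀ := fun h => cancel 2 (by norm_num) (by linear_combination h)
  have q3 : z₀ ≠ -I*z₀ := fun h => cancel (1 + I) (by simp [Complex.ext_iff]) (by linear_combination h)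
  have q4 : I*z₀ ≠ -z₀ := fun h => cancel (I + 1) (by simp [Complex.ext_iff]) (by linear_combination h)
  have q5 : I*z₀ ≠ -I*z₀ := fun h => cancel (2*I) (by simp [Complex.ext_iff]) (by linear_combination h)
  have q6 : -z₀ ≠ -I*z₀ := fun h => cancel (I - 1) (by simp [Complex.ext_iff]) (by linear_combination h)
  have hcard : ({z₀, I*z₀, -z₀, -I*z₀} : Finset ℂ).card = 4 := by
    rw [Finset.card_insert_of_notMem, Finset.card_insert_of_notMem,
        Finset.card_insert_of_notMem, Finset.card_singleton]
    · simpa using q6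
    · simp only [Finset.mem_insert, Finset.mem_singleton]
      push_neg
      exact ⟨q4, q5⟩
    · simp only [Finset.mem_insert, Finset.mem_singleton]
      push_neg
      exact ⟨q1, q2, q3⟩
  rw [hcard]

open Classical in
/-- Number of ordered pairs of distinct points of `S` at distance exactly `1`
(twice the number of unordered such pairs). -/
noncomputable def unitPairs {d : ℕ} (S : Finset (EuclideanSpace ℝ (Fin d))) : ℕ :=
  (S.offDiag.filter fun p => dist p.1 p.2 = 1).card

/-- Among `n` points on a circle of radius `1/√2` there are at most `n` unit-distance
pairs, and at most `n - 1` if `n` is not divisible by `4`. -/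
theorem stmt_1 (n : ℕ) (S : Finset (EuclideanSpace ℝ (Fin 2))) (c : EuclideanSpace ℝ (Fin 2))
    (hcard : S.card = n)
    (hcirc : ∀ x ∈ S, dist x c = 1 / Real.sqrt 2) :
    unitPairs S ≤ 2 * n ∧ (¬ (4 ∣ n) → unitPairs S ≤ 2 * (n - 1)) := by
  classical
  subst hcard
  have habs : ∀ p ∈ S, ‖phi c p‖ = 1 / Real.sqrt 2 := fun p hp => by
    rw [phi_abs]; exact hcirc p hp
  have hne0 : ∀ p ∈ S, phi c p ≠ 0 := fun p hp h => by
    have h1 := habs p hp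
    rw [h, norm_zero] at h1
    have h2 : (0:ℝ) < 1 / Real.sqrt 2 := by positivity
    linarith
  set A := S.filter (fun q => ∃ p ∈ S, phi c p = I * phi c q) with hA
  -- characterize edges
  have hchar : ∀ x ∈ S.offDiag, (dist x.1 x.2 = 1 ↔
      (phi c x.1 = I * phi c x.2 ∨ phi c x.1 = -I * phi c x.2)) := by
    rintro ⟨p, q⟩ hx
    rw [Finset.mem_offDiag] at hx
    rw [← phi_dist c, Complex.dist_eq]
    exact unit_iff (habs p hx.1) (habs q hx.2.1)
  have hE : (S.offDiag.filter fun x => dist x.1 x.2 = 1) =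
      (S.offDiag.filter fun x => phi c x.1 = I * phi c x.2) ∪
      (S.offDiag.filter fun x => phi c x.1 = -I * phi c x.2) := by
    rw [← Finset.filter_or]
    exact Finset.filter_congr hchar
  have hdisj : Disjoint (S.offDiag.filter fun x => phi c x.1 = I * phi c x.2)
      (S.offDiag.filter fun x => phi c x.1 = -I * phi c x.2) := by
    rw [Finset.disjoint_filter]
    rintro ⟨p, q⟩ hx h1 h2
    rw [Finset.mem_offDiag] at hx
    apply hne0 q hx.2.1
    have h1' : phi c p = I * phi c q := h1
    have h2' : phi c p = -I * phi c q := h2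
    have : (2*I) * phi c q = 0 := by linear_combination h2' - h1'
    rcases mul_eq_zero.1 this with h | h
    · exact absurd h (by simp [Complex.ext_iff])
    · exact h
  have hc1 : (S.offDiag.filter fun x => phi c x.1 = I * phi c x.2).card = A.card := by
    apply Finset.card_bij (fun x _ => x.2)
    · rintro ⟨p, q⟩ hx
      rw [Finset.mem_filter] at hx
      rw [Finset.mem_offDiag] at hx
      rw [hA, Finset.mem_filter]
      exact ⟨hx.1.2.1, p, hx.1.1, hx.2⟩
    · rintro ⟨p, q⟩ hx ⟨p', q'⟩ hx' h
      rw [Finset.mem_filter] at hx hx'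
      simp only at h
      subst h
      have h1' : phi c p = I * phi c q := hx.2
      have h2' : phi c p' = I * phi c q := hx'.2
      have := (phi_inj c) (h1'.trans h2'.symm)
      simp only [Prod.mk.injEq]
      exact ⟨this, trivial⟩
    · intro q hq
      rw [hA, Finset.mem_filter] at hq
      obtain ⟨hqS, p, hpS, hpq⟩ := hq
      have hne : p ≠ q := by
        rintro rfl
        apply hne0 p hpS
        have : (1 - I) * phi c p = 0 := by linear_combination hpq
        rcases mul_eq_zero.1 this with h | h
        · exact absurd h (by simp [Complex.ext_iff])
        · exact h
      exact ⟨(p, q), by rw [Finset.mem_filter, Finset.mem_offDiag]; exact ⟨⟨hpS, hqS, hne⟩, hpq⟩, rfl⟩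
  have hc2 : (S.offDiag.filter fun x => phi c x.1 = -I * phi c x.2).card =
      (S.offDiag.filter fun x => phi c x.1 = I * phi c x.2).card := by
    apply Finset.card_bij (fun x _ => (x.2, x.1))
    · rintro ⟨p, q⟩ hx
      rw [Finset.mem_filter, Finset.mem_offDiag] at hx
      rw [Finset.mem_filter, Finset.mem_offDiag]
      refine ⟨⟨hx.1.2.1, hx.1.1, (Ne.symm hx.1.2.2)⟩, ?_⟩
      have this' : phi c p = -I * phi c q := hx.2
      show phi c q = I * phi c p
      have h2 : I * I = -1 := Complex.I_mul_I
      linear_combination (-I) * this' + phi c q * h2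
    · rintro ⟨p, q⟩ _ ⟨p', q'⟩ _ h
      simp only [Prod.mk.injEq] at h ⊢
      exact ⟨h.2, h.1⟩
    · rintro ⟨p, q⟩ hx
      rw [Finset.mem_filter, Finset.mem_offDiag] at hx
      refine ⟨(q, p), ?_, rfl⟩
      rw [Finset.mem_filter, Finset.mem_offDiag]
      refine ⟨⟨hx.1.2.1, hx.1.1, Ne.symm hx.1.2.2⟩, ?_⟩
      have this' : phi c p = I * phi c q := hx.2
      show phi c q = -I * phi c p
      have h2 : I * I = -1 := Complex.I_mul_I
      linear_combination I * this' + phi c q * h2 + phi c q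
  have hup : unitPairs S = 2 * A.card := by
    rw [unitPairs, hE, Finset.card_union_of_disjoint hdisj, hc1, hc2, hc1]
    ring
  have hAS : A ⊆ S := Finset.filter_subset _ _
  have hAcard : A.card ≤ S.card := Finset.card_le_card hAS
  constructor
  · rw [hup]; omega
  · intro hdvd
    rcases lt_or_eq_of_le hAcard with hlt | heq
    · rw [hup]; omega
    · exfalso
      apply hdvd
      have hAeq : A = S := Finset.eq_of_subset_of_card_le hAS (le_of_eq heq.symm)
      have hUcard : (S.image (phi c)).card = S.card :=
        Finset.card_image_of_injective S (phi_inj c)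
      rw [← hUcard]
      apply four_dvd
      · intro z hz
        obtain ⟨p, hp, rfl⟩ := Finset.mem_image.1 hz
        exact hne0 p hp
      · intro z hz
        obtain ⟨q, hq, rfl⟩ := Finset.mem_image.1 hz
        have : q ∈ A := hAeq.symm ▸ hq
        rw [hA, Finset.mem_filter] at this
        obtain ⟨_, p, hpS, hpq⟩ := this
        exact Finset.mem_image.2 ⟨p, hpS, hpq⟩
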